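/- arXiv:1211.6895 — 2 statements merged into one kernel-verified Lean document; each statement's English description precedes it below -/
import Mathlib

section
/- (Uniqueness up to scalar in rational function reconstruction.) Let f ∈ K[x] be monic of degree ℓ + 1 and g ∈ K[x] with deg(g) ≤ ℓ. If r₁ = s₁·f + t₁·g and r₂ = s₂·f + t₂·g are nonzero with deg(r₁) + deg(t₂) < ℓ + 1 and deg(r₂) + deg(t₁) < ℓ + 1, then r₁·t₂ = r₂·t₁. -/
open Polynomial

theorem rational_reconstruction_unique_up_to_scalar
    {K : Type*} [Field K] (ℓ : ℕ)
    (f g r₁ s₁ t₁ r₂ s₂ t₂ : K[X])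
    (hf : f.Monic) (hdegf : f.natDegree = ℓ + 1) (hg : g.degree ≤ ℓ)
    (h₁ : r₁ = s₁ * f + t₁ * g) (h₂ : r₂ = s₂ * f + t₂ * g)
    (hr₁ : r₁ ≠ 0) (hr₂ : r₂ ≠ 0) (ht₁ : t₁ ≠ 0) (ht₂ : t₂ ≠ 0)
    (hdeg₁ : r₁.natDegree + t₂.natDegree < ℓ + 1)
    (hdeg₂ : r₂.natDegree + t₁.natDegree < ℓ + 1) :
    r₁ * t₂ = r₂ * t₁ := by
  have key : r₁ * t₂ - r₂ * t₁ = (s₁ * t₂ - s₂ * t₁) * f := by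
    rw [h₁, h₂]; ring
  by_contra hne
  have hd : r₁ * t₂ - r₂ * t₁ ≠ 0 := sub_ne_zero.mpr hne
  have hs : s₁ * t₂ - s₂ * t₁ ≠ 0 := by
    intro h; rw [h, zero_mul] at key; exact hd key
  have hfne : f ≠ 0 := hf.ne_zero
  have hge : ℓ + 1 ≤ (r₁ * t₂ - r₂ * t₁).natDegree := by
    rw [key, natDegree_mul hs hfne, hdegf]
    omega
  have hlt : (r₁ * t₂ - r₂ * t₁).natDegree < ℓ + 1 := by
    apply lt_of_le_of_lt (natDegree_sub_le _ _)
    rw [natDegree_mul hr₁ ht₂, natDegree_mul hr₂ ht₁]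
    omega
  omega
end

section
/- Let f = ∏ⱼ₌₀^k (x − xⱼ)^{aⱼ} with ∑ aⱼ = ℓ + 1, and suppose A, B ∈ K[x] with deg(A) ≤ a, deg(B) ≤ b (a + b = ℓ), B(xᵢ) ≠ 0 for all i, solve the osculatory interpolation problem, i.e., f divides A − B·g where g is the Hermite interpolation polynomial. If A₁, B₁ is another such solution, then A₁·B = A·B₁. -/
open Polynomial

theorem osculatory_uniqueness
    {K : Type*} [Field K] [CharZero K] (k a b ℓ : ℕ) (hℓ : ℓ = a + b)
    (x : Fin (k + 1) → K) (hx : Function.Injective x)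
    (m : Fin (k + 1) → ℕ) (hm : ∀ j, 0 < m j) (hsum : ∑ j, m j = ℓ + 1)
    (f g : K[X]) (hf : f = ∏ j, (X - C (x j)) ^ (m j)) (hg : g.degree ≤ ℓ)
    (A B : K[X]) (hA : A.degree ≤ a) (hB : B.degree ≤ b)
    (hBx : ∀ i, B.eval (x i) ≠ 0) (hsol : f ∣ (A - B * g))
    (A₁ B₁ : K[X]) (hA₁ : A₁.degree ≤ a) (hB₁ : B₁.degree ≤ b)
    (hB₁x : ∀ i, B₁.eval (x i) ≠ 0) (hsol₁ : f ∣ (A₁ - B₁ * g)) :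
    A₁ * B = A * B₁ := by
  have hdvd : f ∣ (A * B₁ - A₁ * B) := by
    have : A * B₁ - A₁ * B = (A - B * g) * B₁ - (A₁ - B₁ * g) * B := by ring
    rw [this]
    exact dvd_sub (hsol.mul_right _) (hsol₁.mul_right _)
  have hdegf : f.degree = (ℓ + 1 : ℕ) := by
    rw [hf, degree_prod]
    simp only [degree_pow, degree_X_sub_C]
    rw [← hsum]
    push_cast
    simp [mul_comm]
  have hdeg : (A * B₁ - A₁ * B).degree < f.degree := by
    rw [hdegf]
    apply lt_of_le_of_lt (degree_sub_le _ _)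
    have h1 : (A * B₁).degree ≤ (ℓ : WithBot ℕ) := by
      apply le_trans (degree_mul_le _ _)
      calc A.degree + B₁.degree ≤ (a : WithBot ℕ) + b := add_le_add hA hB₁
        _ = (ℓ : WithBot ℕ) := by rw [hℓ]; push_cast; ring
    have h2 : (A₁ * B).degree ≤ (ℓ : WithBot ℕ) := by
      apply le_trans (degree_mul_le _ _)
      calc A₁.degree + B.degree ≤ (a : WithBot ℕ) + b := add_le_add hA₁ hB
        _ = (ℓ : WithBot ℕ) := by rw [hℓ]; push_cast; ring
    apply lt_of_le_of_lt (max_le h1 h2)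
    exact_mod_cast WithBot.coe_lt_coe.mpr (Nat.lt_succ_self ℓ)
  have := Polynomial.eq_zero_of_dvd_of_degree_lt hdvd hdeg
  linear_combination -this
end
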